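/- Let $b_1, b_2 \in \mathbb{Z}[i]$ be nonzero Gaussian integers with $|b_1| > 1$ and $|b_2| > 1$. Then $1$ lies in the closure of the set $P = \{ b_1^{l_1} / b_2^{l_2} : l_1, l_2 \in \mathbb{Z}_{>0} \} \subset \mathbb{C}$; in particular, for every $\varepsilon > 0$ there are positive integers $l_1, l_2$ with $|b_1^{l_1}/b_2^{l_2} - 1| < \varepsilon$. -/

import Mathlib

lemma ratio_powers_close_to_one (c1 c2 : ℂ) (h1 : 1 < ‖c1‖)
    (h2 : 1 < ‖c2‖) (ε : ℝ) (hε : 0 < ε) :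
    ∃ l1 l2 : ℕ, 0 < l1 ∧ 0 < l2 ∧ ‖c1 ^ l1 / c2 ^ l2 - 1‖ < ε := by
  have hc1 : c1 ≠ 0 := by
    intro h; rw [h] at h1; simp at h1; linarith
  have hc2 : c2 ≠ 0 := by
    intro h; rw [h] at h2; simp at h2; linarith
  set a := Real.log (‖c1‖) with ha
  set b := Real.log (‖c2‖) with hb
  have ha0 : 0 < a := Real.log_pos h1
  have hb0 : 0 < b := Real.log_pos h2
  set δ := min ε ((‖c1‖ - 1) / 2) with hδdef
  have hδ0 : 0 < δ := lt_min hε (by linarith)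
  have hδε : δ ≤ ε := min_le_left _ _
  have hδc1 : δ < ‖c1‖ - 1 :=
    lt_of_le_of_lt (min_le_right _ _) (by linarith)
  set k : ℕ → ℕ := fun n => ⌊(n * a) / b⌋₊ with hk
  set v : ℕ → ℂ := fun n => c1 ^ n / c2 ^ (k n) with hv
  have habs1 : ‖c1‖ = Real.exp a := (Real.exp_log (by linarith)).symm
  have habs2 : ‖c2‖ = Real.exp b := (Real.exp_log (by linarith)).symm
  have hvabs : ∀ n, ‖v n‖ = Real.exp (n * a - k n * b) := by
    intro n
    simp only [hv, norm_div, norm_pow, habs1, habs2, ← Real.exp_nat_mul,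
      Real.exp_sub, mul_comm]
  have hv1 : ∀ n, 1 ≤ ‖v n‖ := by
    intro n
    rw [hvabs n, Real.one_le_exp_iff]
    have hfl : (k n : ℝ) ≤ (n * a) / b := Nat.floor_le (by positivity)
    rw [le_div_iff₀ hb0] at hfl
    linarith
  have hvb : ∀ n, ‖v n‖ ≤ Real.exp b := by
    intro n
    rw [hvabs n, Real.exp_le_exp]
    have hfl : (n * a) / b < k n + 1 := Nat.lt_floor_add_one _
    rw [div_lt_iff₀ hb0] at hfl
    nlinarith
  obtain ⟨c, -, φ, hφ, hconv⟩ := tendsto_subseq_of_bounded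
    (Metric.isBounded_closedBall (x := (0 : ℂ)) (r := Real.exp b))
    (x := v) (fun n => by
      simpa [Metric.mem_closedBall, Complex.dist_eq] using hvb n)
  obtain ⟨N, hN⟩ := Metric.tendsto_atTop.mp hconv (δ / 2) (by linarith)
  set n := φ N with hndef
  set m := φ (N + 1) with hmdef
  have hnm : n < m := hφ (Nat.lt_succ_self N)
  have hdist : dist (v m) (v n) < δ := by
    calc dist (v m) (v n) ≤ dist (v m) c + dist (v n) c := dist_triangle_right _ _ _
      _ < δ / 2 + δ / 2 := add_lt_add (hN (N + 1) (Nat.le_succ N)) (hN N le_rfl)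
      _ = δ := by ring
  have hkmono : k n ≤ k m := by
    apply Nat.floor_mono
    have hcast : (n : ℝ) ≤ m := by exact_mod_cast hnm.le
    gcongr
  set l1 := m - n with hl1
  set l2 := k m - k n with hl2
  have hm : m = n + l1 := (Nat.add_sub_cancel' hnm.le).symm
  have hkm : k m = k n + l2 := (Nat.add_sub_cancel' hkmono).symm
  have hvn0 : v n ≠ 0 := by
    intro h
    have := hv1 n
    rw [h] at this; simp at this; linarith
  have hratio : v m / v n = c1 ^ l1 / c2 ^ l2 := by
    have e1 : c1 ^ m = c1 ^ n * c1 ^ l1 := by rw [hm, pow_add]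
    have e2 : c2 ^ (k m) = c2 ^ (k n) * c2 ^ l2 := by rw [hkm, pow_add]
    simp only [hv]
    rw [e1, e2]
    field_simp
  have hclose : ‖c1 ^ l1 / c2 ^ l2 - 1‖ < δ := by
    rw [← hratio]
    have e : v m / v n - 1 = (v m - v n) / v n := by field_simp
    rw [e, norm_div]
    calc ‖v m - v n‖ / ‖v n‖
        ≤ ‖v m - v n‖ := by
          apply div_le_self (by positivity) (hv1 n)
      _ < δ := by rw [← Complex.dist_eq]; exact hdist
  refine ⟨l1, l2, Nat.sub_pos_of_lt hnm, ?_, lt_of_lt_of_le hclose hδε⟩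
  by_contra hl20
  push_neg at hl20
  interval_cases l2
  have h1l1 : ‖c1‖ ≤ ‖c1 ^ l1‖ := by
    rw [norm_pow]
    calc ‖c1‖ = ‖c1‖ ^ 1 := (pow_one _).symm
      _ ≤ ‖c1‖ ^ l1 :=
        pow_le_pow_right₀ (le_of_lt h1) (Nat.sub_pos_of_lt hnm)
  have htri : ‖c1 ^ l1‖ ≤ ‖c1 ^ l1 / c2 ^ 0 - 1‖ + 1 := by
    have := norm_add_le (c1 ^ l1 / c2 ^ 0 - 1) 1
    simpa using this
  linarith

theorem one_mem_closure_ratio_powers (b1 b2 : GaussianInt) (hb1 : b1 ≠ 0) (hb2 : b2 ≠ 0)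
    (h1 : 1 < ‖GaussianInt.toComplex b1‖)
    (h2 : 1 < ‖GaussianInt.toComplex b2‖) :
    (1 : ℂ) ∈ closure {w : ℂ | ∃ l1 l2 : ℕ, 0 < l1 ∧ 0 < l2 ∧
      w = (GaussianInt.toComplex b1) ^ l1 / (GaussianInt.toComplex b2) ^ l2} ∧
    ∀ ε : ℝ, 0 < ε → ∃ l1 l2 : ℕ, 0 < l1 ∧ 0 < l2 ∧
      ‖(GaussianInt.toComplex b1) ^ l1 / (GaussianInt.toComplex b2) ^ l2 - 1‖ < ε := by
  constructor
  · rw [Metric.mem_closure_iff]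
    intro ε hε
    obtain ⟨l1, l2, hl1, hl2, hcl⟩ :=
      ratio_powers_close_to_one _ _ h1 h2 ε hε
    refine ⟨_, ⟨l1, l2, hl1, hl2, rfl⟩, ?_⟩
    rw [Complex.dist_eq, ← norm_neg]
    simpa using hcl
  · intro ε hε
    exact ratio_powers_close_to_one _ _ h1 h2 ε hε
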